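/- For the path P_n on n vertices and integers n ≥ k ≥ 2 and 1 ≤ k' ≤ k with k − k' ≥ 2, the Steiner (k,k')-radius satisfies Sr_{k,k'}(P_n) = n − 1. -/

import Mathlib

open SimpleGraph

/-- The Steiner distance of a vertex set `S` in `G`: the minimum number of edges of a
connected subgraph of `G` whose vertex set contains `S`. -/
noncomputable def steinerDist {V : Type*} (G : SimpleGraph V) (S : Finset V) : ℕ :=
  sInf {n | ∃ H : G.Subgraph, H.Connected ∧ ↑S ⊆ H.verts ∧ H.edgeSet.ncard = n}

/-- The Steiner `k`-diameter of `G`: the maximum Steiner distance over `k`-subsets. -/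
noncomputable def steinerDiam {V : Type*} [Fintype V] [DecidableEq V]
    (G : SimpleGraph V) (k : ℕ) : ℕ :=
  Finset.sup (Finset.univ.filter fun S : Finset V => S.card = k) (steinerDist G)

/-- The Steiner `(k,k')`-eccentricity of a `k'`-subset `S'`. -/
noncomputable def steinerEcc {V : Type*} [Fintype V] [DecidableEq V]
    (G : SimpleGraph V) (k : ℕ) (S' : Finset V) : ℕ :=
  Finset.sup (Finset.univ.filter fun S : Finset V => S.card = k ∧ S' ⊆ S) (steinerDist G)

/-- The Steiner `(k,k')`-radius of `G`. -/
noncomputable def steinerRadius {V : Type*} [Fintype V] [DecidableEq V]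
    (G : SimpleGraph V) (k k' : ℕ) : ℕ :=
  sInf {n | ∃ S' : Finset V, S'.card = k' ∧ steinerEcc G k S' = n}

/-- The diameter of `G`: the maximum distance between two vertices. -/
noncomputable def gDiam {V : Type*} [Fintype V] (G : SimpleGraph V) : ℕ :=
  Finset.sup Finset.univ (fun p : V × V => G.dist p.1 p.2)

/-- The number of pendant vertices (leaves) of `G`. -/
noncomputable def leafCount {V : Type*} [Fintype V] [DecidableEq V]
    (G : SimpleGraph V) [DecidableRel G.Adj] : ℕ :=
  (Finset.univ.filter fun v => G.degree v = 1).card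

lemma walk_length_lb {n : ℕ} {u v : Fin n} (w : (pathGraph n).Walk u v) :
    (v : ℤ) ≤ (u : ℤ) + w.length := by
  induction w with
  | nil => simp
  | cons h p ih =>
    rename_i a b c
    rw [pathGraph_adj] at h
    have hb : (b : ℤ) ≤ (a : ℤ) + 1 := by omega
    simp only [SimpleGraph.Walk.length_cons]
    push_cast
    omega

lemma pathGraph_edgeSet_ncard {n : ℕ} (hn : 1 ≤ n) :
    (pathGraph n).edgeSet.ncard = n - 1 := by
  classical
  set f : Fin (n - 1) → Sym2 (Fin n) :=
    fun i => s(⟨i, by omega⟩, ⟨i + 1, by omega⟩) with hf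
  have hrange : (pathGraph n).edgeSet = Set.range f := by
    ext e
    induction e with
    | h u v =>
      simp only [SimpleGraph.mem_edgeSet, pathGraph_adj, Set.mem_range]
      constructor
      · rintro (h | h)
        · refine ⟨⟨u, by omega⟩, ?_⟩
          simp only [hf]
          rw [Sym2.eq_iff]
          left
          exact ⟨Fin.ext rfl, Fin.ext h⟩
        · refine ⟨⟨v, by omega⟩, ?_⟩
          rw [Sym2.eq_swap]
          simp only [hf]
          rw [Sym2.eq_iff]
          left
          exact ⟨Fin.ext rfl, Fin.ext h⟩
      · rintro ⟨i, hi⟩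
        simp only [hf] at hi
        rw [Sym2.eq_iff] at hi
        rcases hi with ⟨h1, h2⟩ | ⟨h1, h2⟩
        · left; rw [← h1, ← h2]
        · right; rw [← h1, ← h2]
  have hinj : Function.Injective f := by
    intro i j hij
    simp only [hf, Sym2.eq_iff] at hij
    rcases hij with ⟨h1, _⟩ | ⟨h1, h2⟩
    · exact Fin.ext (by simpa using congrArg Fin.val h1)
    · have := congrArg Fin.val h1
      have := congrArg Fin.val h2
      simp at *
      omega
  rw [hrange, ← Set.image_univ, Set.ncard_image_of_injective _ hinj,
    Set.ncard_univ]
  simp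

lemma steinerDist_le {n : ℕ} (hn : 1 ≤ n) (S : Finset (Fin n)) :
    steinerDist (pathGraph n) S ≤ n - 1 := by
  apply Nat.sInf_le
  refine ⟨⊤, ?_, by simp, ?_⟩
  · obtain ⟨m, rfl⟩ := Nat.exists_eq_add_of_le hn
    rw [SimpleGraph.Subgraph.connected_iff']
    have : ((⊤ : (pathGraph (1 + m)).Subgraph).coe ≃g pathGraph (1 + m)) :=
      SimpleGraph.Subgraph.topIso
    exact this.connected_iff.mpr (by rw [add_comm]; exact pathGraph_connected m)
  · rw [SimpleGraph.Subgraph.edgeSet_top]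
    exact pathGraph_edgeSet_ncard hn

lemma steinerDist_eq {n : ℕ} (hn : 1 ≤ n) (S : Finset (Fin n))
    (h0 : (⟨0, by omega⟩ : Fin n) ∈ S) (hl : (⟨n - 1, by omega⟩ : Fin n) ∈ S) :
    steinerDist (pathGraph n) S = n - 1 := by
  refine le_antisymm (steinerDist_le hn S) ?_
  refine le_csInf ⟨n - 1, ?_⟩ ?_
  · refine ⟨⊤, ?_, by simp, ?_⟩
    · obtain ⟨m, rfl⟩ := Nat.exists_eq_add_of_le hn
      rw [SimpleGraph.Subgraph.connected_iff']
      exact (SimpleGraph.Subgraph.topIso).connected_iff.mpr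
        (by rw [add_comm]; exact pathGraph_connected m)
    · rw [SimpleGraph.Subgraph.edgeSet_top]
      exact pathGraph_edgeSet_ncard hn
  · rintro m ⟨H, hconn, hsub, rfl⟩
    have h0' : (⟨0, by omega⟩ : Fin n) ∈ H.verts := hsub h0
    have hl' : (⟨n - 1, by omega⟩ : Fin n) ∈ H.verts := hsub hl
    obtain ⟨p, hp⟩ :=
      (SimpleGraph.Subgraph.preconnected_iff_forall_exists_walk_subgraph H).mp
        hconn.preconnected h0' hl'
    set q := p.bypass with hq
    have hqpath : q.IsPath := p.bypass_isPath
    have hqlen : n - 1 ≤ q.length := by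
      have := walk_length_lb q
      simp at this
      omega
    have hedges : ∀ e ∈ q.edges, e ∈ H.edgeSet := by
      intro e he
      have : e ∈ p.edges := p.edges_bypass_subset he
      have : e ∈ p.toSubgraph.edgeSet := by
        rwa [SimpleGraph.Walk.edgeSet_toSubgraph]
      exact SimpleGraph.Subgraph.edgeSet_mono hp this
    have hsubset : (↑q.edges.toFinset : Set (Sym2 (Fin n))) ⊆ H.edgeSet := by
      intro e he
      simp only [Finset.coe_sort_coe, List.coe_toFinset, Set.mem_setOf_eq] at he
      exact hedges e he
    have hfin : H.edgeSet.Finite := Set.toFinite _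
    have hcard : q.edges.toFinset.card = q.length := by
      rw [List.toFinset_card_of_nodup hqpath.isTrail.edges_nodup,
        SimpleGraph.Walk.length_edges]
    calc n - 1 ≤ q.length := hqlen
      _ = (↑q.edges.toFinset : Set (Sym2 (Fin n))).ncard := by
          rw [Set.ncard_coe_finset, hcard]
      _ ≤ H.edgeSet.ncard := Set.ncard_le_ncard hsubset hfin

lemma steinerEcc_eq {n k k' : ℕ} (hk : 2 ≤ k) (hkn : k ≤ n) (hk' : 1 ≤ k')
    (hkk' : k' + 2 ≤ k) (S' : Finset (Fin n)) (hS' : S'.card = k') :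
    steinerEcc (pathGraph n) k S' = n - 1 := by
  have hn : 1 ≤ n := by omega
  have v0 : Fin n := ⟨0, by omega⟩
  -- build S ⊇ S' ∪ {0, n-1} of card k
  obtain ⟨S, hsub, -, hScard⟩ := Finset.exists_subsuperset_card_eq
    (Finset.subset_univ (S' ∪ {⟨0, by omega⟩, ⟨n - 1, by omega⟩}))
    (le_trans (le_trans (Finset.card_union_le _ _)
      (by simp [hS']; exact le_trans (Finset.card_insert_le _ _) (by simp)))
      (by omega : k' + 2 ≤ k))
    (by simpa using hkn)
  refine le_antisymm ?_ ?_
  · apply Finset.sup_le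
    intro S hS
    exact steinerDist_le hn S
  · have hmem : S ∈ Finset.univ.filter
        fun S : Finset (Fin n) => S.card = k ∧ S' ⊆ S := by
      simp only [Finset.mem_filter, Finset.mem_univ, true_and]
      exact ⟨hScard, le_trans (Finset.subset_union_left) hsub⟩
    have h0 : (⟨0, by omega⟩ : Fin n) ∈ S :=
      hsub (Finset.mem_union_right _ (by simp))
    have hl : (⟨n - 1, by omega⟩ : Fin n) ∈ S :=
      hsub (Finset.mem_union_right _ (by simp))
    calc n - 1 = steinerDist (pathGraph n) S := (steinerDist_eq hn S h0 hl).symm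
      _ ≤ _ := Finset.le_sup hmem

theorem stmt11 (n k k' : ℕ) (hk : 2 ≤ k) (hkn : k ≤ n) (hk' : 1 ≤ k')
    (hkk' : k' + 2 ≤ k) :
    steinerRadius (pathGraph n) k k' = n - 1 := by
  have hn : 1 ≤ n := by omega
  have hset : {m | ∃ S' : Finset (Fin n), S'.card = k' ∧
      steinerEcc (pathGraph n) k S' = m} = {n - 1} := by
    ext m
    simp only [Set.mem_setOf_eq, Set.mem_singleton_iff]
    constructor
    · rintro ⟨S', hS', rfl⟩
      exact steinerEcc_eq hk hkn hk' hkk' S' hS'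
    · rintro rfl
      obtain ⟨S', hS'⟩ := Finset.exists_subset_card_eq
        (by simpa using (by omega : k' ≤ n) : k' ≤ (Finset.univ : Finset (Fin n)).card)
      exact ⟨S', hS'.2, steinerEcc_eq hk hkn hk' hkk' S' hS'.2⟩
  rw [steinerRadius, hset, csInf_singleton]
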